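/- If A and B are subsets of a common linear order, and each of A and B embeds into I^α for some countable ordinal α (where I = [0,1] with lexicographic powers), then A ∪ B embeds into I^β for some countable ordinal β. In other words, countable I-dimension is preserved under finite unions of subsets of a common linear order. -/

import Mathlib

open Ordinal Cardinal

noncomputable section

namespace Stmt11Aux

/-! ### Least upper bounds in lexicographic powers -/

section LexSup

variable {ι : Type*} [LinearOrder ι] [WellFoundedLT ι]
variable {R : Type*} [CompleteLinearOrder R]

/-- Candidate least upper bound of a set in a lexicographic power of a complete
linear order over a well-ordered index, defined by well-founded recursion. -/
def lexSup (S : Set (Lex (ι → R))) : ι → R :=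
  WellFounded.fix (wellFounded_lt)
    (fun i rec =>
      sSup {v | ∃ f ∈ S, (∀ j, ∀ h : j < i, ofLex f j = rec j h) ∧ ofLex f i = v})

theorem lexSup_eq (S : Set (Lex (ι → R))) (i : ι) :
    lexSup S i =
      sSup {v | ∃ f ∈ S, (∀ j, j < i → ofLex f j = lexSup S j) ∧ ofLex f i = v} := by
  conv_lhs => rw [lexSup, WellFounded.fix_eq]
  rfl

theorem isLUB_lexSup (S : Set (Lex (ι → R))) : IsLUB S (toLex (lexSup S)) := by
  constructor
  · intro f hf
    rcases eq_or_ne (ofLex f) (lexSup S) with h | h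
    · exact le_of_eq (congrArg toLex h)
    · obtain ⟨i, hi, hmin⟩ := (wellFounded_lt (α := ι)).has_min
        {i | ofLex f i ≠ lexSup S i} (Function.ne_iff.mp h)
      exact le_of_lt ⟨i,
        fun j hj => not_not.mp fun hne => hmin j hne hj,
        (by
          rw [lexSup_eq]
          exact le_sSup ⟨f, hf, fun j hj => not_not.mp fun hne => hmin j hne hj, rfl⟩ :
            ofLex f i ≤ lexSup S i).lt_of_ne hi⟩
  · intro u hu
    rcases eq_or_ne (lexSup S) (ofLex u) with h | h
    · exact le_of_eq (congrArg toLex h)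
    · obtain ⟨i, hi, hmin⟩ := (wellFounded_lt (α := ι)).has_min
        {i | lexSup S i ≠ ofLex u i} (Function.ne_iff.mp h)
      have hpre : ∀ j, j < i → lexSup S j = ofLex u j :=
        fun j hj => not_not.mp fun hne => hmin j hne hj
      rcases lt_or_gt_of_ne hi with hlt | hgt
      · exact le_of_lt ⟨i, hpre, hlt⟩
      · exfalso
        rw [lexSup_eq] at hgt
        obtain ⟨v, ⟨gg, hgS, hgpre, hgv⟩, huv⟩ := lt_sSup_iff.mp hgt
        have : u < gg :=
          ⟨i, fun j hj => (hpre j hj).symm.trans (hgpre j hj).symm,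
            lt_of_lt_of_eq huv hgv.symm⟩
        exact absurd (hu hgS) (not_le.mpr this)

end LexSup

/-! ### The main construction -/

instance sumLexWF {X Y : Type*} [LT X] [LT Y] [WellFoundedLT X] [WellFoundedLT Y] :
    WellFoundedLT (X ⊕ₗ Y) :=
  ⟨Sum.lex_wf (wellFounded_lt) (wellFounded_lt)⟩

universe up in
instance : WellFoundedLT PUnit.{up + 1} := Finite.to_wellFoundedLT

instance : Fact ((0 : ℝ) ≤ 1) := ⟨zero_le_one⟩

section Main

variable {L : Type} [LinearOrder L] {A B : Set L}
universe uu vv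

variable {ι₁ : Type uu} {ι₂ : Type vv}
variable [LinearOrder ι₁] [WellFoundedLT ι₁] [LinearOrder ι₂] [WellFoundedLT ι₂]

local notation "I" => Set.Icc (0 : ℝ) 1

variable (f : A ↪o Lex (ι₁ → I)) (g : B ↪o Lex (ι₂ → I))

/-- Extension of `f` to `A ∪ B` by taking least upper bounds. -/
def u1 (x : ↥(A ∪ B)) : Lex (ι₁ → I) :=
  toLex (lexSup {v | ∃ a : A, (a : L) ≤ (x : L) ∧ f a = v})

/-- Extension of `g` to `A ∪ B` by taking least upper bounds. -/
def u2 (x : ↥(A ∪ B)) : Lex (ι₂ → I) :=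
  toLex (lexSup {v | ∃ b : B, (b : L) ≤ (x : L) ∧ g b = v})

theorem isLUB_u1 (x : ↥(A ∪ B)) :
    IsLUB {v | ∃ a : A, (a : L) ≤ (x : L) ∧ f a = v} (u1 f x) :=
  isLUB_lexSup _

theorem isLUB_u2 (x : ↥(A ∪ B)) :
    IsLUB {v | ∃ b : B, (b : L) ≤ (x : L) ∧ g b = v} (u2 g x) :=
  isLUB_lexSup _

theorem u1_mono : Monotone (u1 (B := B) f) := by
  intro x y hxy
  refine (isLUB_u1 f x).mono (isLUB_u1 f y) ?_
  rintro v ⟨a, ha, rfl⟩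
  exact ⟨a, ha.trans hxy, rfl⟩

theorem u2_mono : Monotone (u2 (A := A) g) := by
  intro x y hxy
  refine (isLUB_u2 g x).mono (isLUB_u2 g y) ?_
  rintro v ⟨b, hb, rfl⟩
  exact ⟨b, hb.trans hxy, rfl⟩

theorem u1_eq (x : ↥(A ∪ B)) (hx : (x : L) ∈ A) : u1 f x = f ⟨(x : L), hx⟩ := by
  refine (isLUB_u1 f x).unique (IsGreatest.isLUB ⟨⟨⟨(x : L), hx⟩, le_rfl, rfl⟩, ?_⟩)
  rintro v ⟨a, ha, rfl⟩
  exact f.le_iff_le.mpr ha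

theorem u2_eq (x : ↥(A ∪ B)) (hx : (x : L) ∈ B) : u2 g x = g ⟨(x : L), hx⟩ := by
  refine (isLUB_u2 g x).unique (IsGreatest.isLUB ⟨⟨⟨(x : L), hx⟩, le_rfl, rfl⟩, ?_⟩)
  rintro v ⟨b, hb, rfl⟩
  exact g.le_iff_le.mpr hb

theorem u1_strict {x y : ↥(A ∪ B)} (hx : (x : L) ∈ A) (hy : (y : L) ∈ A)
    (hxy : x < y) : u1 f x < u1 f y := by
  rw [u1_eq f x hx, u1_eq f y hy]
  exact f.lt_iff_lt.mpr (show ((⟨(x : L), hx⟩ : A)) < ⟨(y : L), hy⟩ from hxy)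

theorem u2_strict {x y : ↥(A ∪ B)} (hx : (x : L) ∈ B) (hy : (y : L) ∈ B)
    (hxy : x < y) : u2 g x < u2 g y := by
  rw [u2_eq g x hx, u2_eq g y hy]
  exact g.lt_iff_lt.mpr (show ((⟨(x : L), hx⟩ : B)) < ⟨(y : L), hy⟩ from hxy)

/-- No three elements of `A ∪ B` can share both extension values. -/
theorem key3 (x y w : ↥(A ∪ B)) (hxy : x < y) (hyw : y < w)
    (e1 : u1 f x = u1 f y) (e1' : u1 f y = u1 f w)
    (e2 : u2 g x = u2 g y) (e2' : u2 g y = u2 g w) : False := by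
  rcases x.2 with hx | hx
  · rcases y.2 with hy | hy
    · exact (u1_strict f hx hy hxy).ne e1
    · rcases w.2 with hw | hw
      · exact (u1_strict f hx hw (hxy.trans hyw)).ne (e1.trans e1')
      · exact (u2_strict g hy hw hyw).ne e2'
  · rcases y.2 with hy | hy
    · rcases w.2 with hw | hw
      · exact (u1_strict f hy hw hyw).ne e1'
      · exact (u2_strict g hx hw (hxy.trans hyw)).ne (e2.trans e2')
    · exact (u2_strict g hx hy hxy).ne e2

/-- Flag distinguishing the two elements of a fiber of `x ↦ (u1 x, u2 x)`. -/
def flagd (x : ↥(A ∪ B)) : Prop :=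
  ∃ w, w < x ∧ u1 f w = u1 f x ∧ u2 g w = u2 g x

open Classical in
/-- The combined map into the big lexicographic power. -/
def bigF (x : ↥(A ∪ B)) : ((ι₁ ⊕ₗ ι₂) ⊕ₗ PUnit.{1}) → I := fun j =>
  Sum.elim
    (fun t => Sum.elim (fun i => ofLex (u1 f x) i) (fun i => ofLex (u2 g x) i) (ofLex t))
    (fun _ => if flagd f g x then ⟨1, by norm_num⟩ else ⟨0, by norm_num⟩)
    (ofLex j)

theorem bigF_strictMono :
    StrictMono (fun x : ↥(A ∪ B) => toLex (bigF f g x)) := by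
  classical
  intro x y hxy
  by_cases h1 : u1 f x = u1 f y
  · by_cases h2 : u2 g x = u2 g y
    · -- distinguish by the flag
      refine ⟨toLex (Sum.inr PUnit.unit), ?_, ?_⟩
      · intro j hj
        rcases hs : ofLex j with t | p
        · have hjj : j = toLex (Sum.inl t) := by rw [← hs]; rfl
          subst hjj
          rcases ht : ofLex t with i | i
          · have htt : t = toLex (Sum.inl i) := by rw [← ht]; rfl
            subst htt
            show ofLex (u1 f x) i = ofLex (u1 f y) i
            rw [h1]
          · have htt : t = toLex (Sum.inr i) := by rw [← ht]; rfl
            subst htt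
            show ofLex (u2 g x) i = ofLex (u2 g y) i
            rw [h2]
        · have hjj : j = toLex (Sum.inr p) := by rw [← hs]; rfl
          subst hjj
          rw [Sum.Lex.toLex_lt_toLex, Sum.lex_inr_inr] at hj
          exact absurd hj (lt_irrefl _)
      · have hfy : flagd f g y := ⟨x, hxy, h1, h2⟩
        have hfx : ¬ flagd f g x := by
          rintro ⟨w, hw, ee1, ee2⟩
          exact key3 f g w x y hw hxy ee1 h1 ee2 h2
        show (if flagd f g x then _ else _) < (if flagd f g y then _ else _)
        rw [if_pos hfy, if_neg hfx]
        exact Subtype.mk_lt_mk.mpr one_pos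
    · -- first difference in the second block
      have hlt : u2 g x < u2 g y := (u2_mono g hxy.le).lt_of_ne h2
      obtain ⟨i, hpre, hi⟩ := hlt
      refine ⟨toLex (Sum.inl (toLex (Sum.inr i))), ?_, hi⟩
      intro j hj
      rcases hs : ofLex j with t | p
      · have hjj : j = toLex (Sum.inl t) := by rw [← hs]; rfl
        subst hjj
        rw [Sum.Lex.toLex_lt_toLex, Sum.lex_inl_inl] at hj
        rcases ht : ofLex t with i' | i'
        · have htt : t = toLex (Sum.inl i') := by rw [← ht]; rfl
          subst htt
          show ofLex (u1 f x) i' = ofLex (u1 f y) i'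
          rw [h1]
        · have htt : t = toLex (Sum.inr i') := by rw [← ht]; rfl
          subst htt
          rw [Sum.Lex.toLex_lt_toLex, Sum.lex_inr_inr] at hj
          exact hpre i' hj
      · have hjj : j = toLex (Sum.inr p) := by rw [← hs]; rfl
        subst hjj
        rw [Sum.Lex.toLex_lt_toLex] at hj
        exact absurd hj Sum.lex_inr_inl
  · -- first difference in the first block
    have hlt : u1 f x < u1 f y := (u1_mono f hxy.le).lt_of_ne h1
    obtain ⟨i, hpre, hi⟩ := hlt
    refine ⟨toLex (Sum.inl (toLex (Sum.inl i))), ?_, hi⟩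
    intro j hj
    rcases hs : ofLex j with t | p
    · have hjj : j = toLex (Sum.inl t) := by rw [← hs]; rfl
      subst hjj
      rw [Sum.Lex.toLex_lt_toLex, Sum.lex_inl_inl] at hj
      rcases ht : ofLex t with i' | i'
      · have htt : t = toLex (Sum.inl i') := by rw [← ht]; rfl
        subst htt
        rw [Sum.Lex.toLex_lt_toLex, Sum.lex_inl_inl] at hj
        exact hpre i' hj
      · have htt : t = toLex (Sum.inr i') := by rw [← ht]; rfl
        subst htt
        rw [Sum.Lex.toLex_lt_toLex] at hj
        exact absurd hj Sum.lex_inr_inl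
    · have hjj : j = toLex (Sum.inr p) := by rw [← hs]; rfl
      subst hjj
      rw [Sum.Lex.toLex_lt_toLex] at hj
      exact absurd hj Sum.lex_inr_inl

end Main

end Stmt11Aux

end

theorem toType_orderIso {o : Ordinal.{v}} {X : Type u} [LinearOrder X] [WellFoundedLT X]
    (h : Ordinal.lift.{u, v} o
        = Ordinal.lift.{v, u} (Ordinal.type ((· < ·) : X → X → Prop))) :
    Nonempty (o.ToType ≃o X) := by
  haveI : IsWellOrder o.ToType (· < ·) := isWellOrder_lt
  rw [← Ordinal.type_toType o] at h
  obtain ⟨e⟩ := (Ordinal.lift_type_eq.{v, u, 0}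
      (r := ((· < ·) : o.ToType → o.ToType → Prop))
      (s := ((· < ·) : X → X → Prop))).mp h
  exact ⟨OrderIso.ofRelIsoLT e⟩

open Stmt11Aux in
theorem stmt11 (L : Type) [LinearOrder L] (A B : Set L)
    (hA : ∃ α : Ordinal, α < ω_ 1 ∧
      Nonempty (A ↪o Lex (α.ToType → Set.Icc (0 : ℝ) 1)))
    (hB : ∃ α : Ordinal, α < ω_ 1 ∧
      Nonempty (B ↪o Lex (α.ToType → Set.Icc (0 : ℝ) 1))) :
    ∃ β : Ordinal, β < ω_ 1 ∧
      Nonempty (↥(A ∪ B) ↪o Lex (β.ToType → Set.Icc (0 : ℝ) 1)) := by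
  classical
  obtain ⟨α₁, hα₁, ⟨f⟩⟩ := hA
  obtain ⟨α₂, hα₂, ⟨g⟩⟩ := hB
  have h1 : #(α₁.ToType) ≤ ℵ₀ := by
    have h := Cardinal.lt_ord.mp (show α₁ < (ℵ_ 1).ord by rwa [Cardinal.ord_aleph])
    rw [Cardinal.mk_toType]
    exact Order.lt_succ_iff.mp (by rwa [Cardinal.succ_aleph0])
  have h2 : #(α₂.ToType) ≤ ℵ₀ := by
    have h := Cardinal.lt_ord.mp (show α₂ < (ℵ_ 1).ord by rwa [Cardinal.ord_aleph])
    rw [Cardinal.mk_toType]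
    exact Order.lt_succ_iff.mp (by rwa [Cardinal.succ_aleph0])
  haveI : Countable (α₁.ToType) := Cardinal.mk_le_aleph0_iff.mp h1
  haveI : Countable (α₂.ToType) := Cardinal.mk_le_aleph0_iff.mp h2
  haveI : Countable ((α₁.ToType ⊕ₗ α₂.ToType) ⊕ₗ PUnit.{1}) :=
    inferInstanceAs (Countable ((α₁.ToType ⊕ α₂.ToType) ⊕ PUnit.{1}))
  have hJlt : Ordinal.type
      ((· < ·) : ((α₁.ToType ⊕ₗ α₂.ToType) ⊕ₗ PUnit.{1}) →
        ((α₁.ToType ⊕ₗ α₂.ToType) ⊕ₗ PUnit.{1}) → Prop) < ω_ 1 := by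
    rw [← Cardinal.ord_aleph, Cardinal.lt_ord, Ordinal.card_type]
    exact lt_of_le_of_lt Cardinal.mk_le_aleph0 Cardinal.aleph0_lt_aleph_one
  obtain ⟨o₀, ho₀⟩ := Ordinal.mem_range_lift_of_le (a := (ω_ 1 : Ordinal.{0}))
    (le_of_lt (by rw [Ordinal.lift_omega, Ordinal.lift_one]; exact hJlt))
  have h0 : o₀ < (ω_ 1 : Ordinal.{0}) := by
    have h' : Ordinal.lift o₀ < Ordinal.lift (ω_ 1 : Ordinal.{0}) := by
      rw [Ordinal.lift_omega, Ordinal.lift_one, ho₀]; exact hJlt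
    exact Ordinal.lift_lt.mp h'
  refine ⟨Ordinal.lift o₀, ?_, ?_⟩
  · have h' : Ordinal.lift o₀ < Ordinal.lift (ω_ 1) := Ordinal.lift_lt.mpr h0
    rwa [Ordinal.lift_omega, Ordinal.lift_one] at h'
  · obtain ⟨eC⟩ := toType_orderIso (o := Ordinal.lift o₀)
      (X := (α₁.ToType ⊕ₗ α₂.ToType) ⊕ₗ PUnit.{1})
      (by rw [Ordinal.lift_lift, ← ho₀, Ordinal.lift_lift])
    refine ⟨OrderEmbedding.ofStrictMono (fun x => toLex fun b => bigF f g x (eC b)) ?_⟩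
    intro x y hxy
    obtain ⟨j₀, hpre, hcur⟩ := bigF_strictMono f g hxy
    refine ⟨eC.symm j₀, ?_, ?_⟩
    · intro b hb
      have := eC.lt_iff_lt.mpr hb
      rw [eC.apply_symm_apply] at this
      exact hpre (eC b) this
    · show bigF f g x (eC (eC.symm j₀)) < bigF f g y (eC (eC.symm j₀))
      rw [eC.apply_symm_apply]
      exact hcur
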